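/- Let (U,V) be a nonnegative bivariate random vector with joint moment generating function M(u,v) = E[exp(uU + vV)] defined for nonpositive arguments, and let γ₁ : ℝ^d → [0,∞) and γ₂ : ℝ^k → [0,∞) be continuous variograms (conditionally negative definite functions vanishing at 0). Then ρ(s, ξ) = M(−γ₁(s), −γ₂(ξ)) is a valid correlation function, i.e., ρ(0,0) = 1 and ρ is positive semidefinite on ℝ^d × ℝ^k. -/

import Mathlib

open MeasureTheory Nat

/-- Positive semidefinite kernel on `Fin n` (quadratic-form formulation). -/
def PSDK {n : ℕ} (K : Fin n → Fin n → ℝ) : Prop :=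
  ∀ a : Fin n → ℝ, 0 ≤ ∑ i, ∑ j, a i * a j * K i j

lemma psdk_one {n : ℕ} : PSDK (fun _ _ : Fin n => (1:ℝ)) := by
  intro a
  have h := mul_self_nonneg (∑ i, a i)
  rw [Finset.sum_mul_sum] at h
  simpa using h

/-- Schur product theorem (one factor given by a Gram decomposition). -/
lemma psdk_mul {n : ℕ} {K L B : Fin n → Fin n → ℝ} (hK : PSDK K)
    (hL : ∀ i j, L i j = ∑ m, B m i * B m j) :
    PSDK (fun i j => K i j * L i j) := by
  intro a
  have key : ∑ i, ∑ j, a i * a j * (K i j * L i j)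
      = ∑ m, ∑ i, ∑ j, (a i * B m i) * (a j * B m j) * K i j := by
    calc ∑ i, ∑ j, a i * a j * (K i j * L i j)
        = ∑ i, ∑ j, ∑ m, (a i * B m i) * (a j * B m j) * K i j := by
          simp_rw [hL, Finset.mul_sum]
          exact Finset.sum_congr rfl fun i _ => Finset.sum_congr rfl fun j _ =>
            Finset.sum_congr rfl fun m _ => by ring
      _ = ∑ i, ∑ m, ∑ j, (a i * B m i) * (a j * B m j) * K i j :=
          Finset.sum_congr rfl fun i _ => Finset.sum_comm
      _ = ∑ m, ∑ i, ∑ j, (a i * B m i) * (a j * B m j) * K i j := Finset.sum_comm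
  rw [key]
  exact Finset.sum_nonneg fun m _ => hK fun i => a i * B m i

/-- Every symmetric PSD kernel admits a Gram decomposition. -/
lemma exists_gram {n : ℕ} {K : Fin n → Fin n → ℝ}
    (hsym : ∀ i j, K j i = K i j) (hK : PSDK K) :
    ∃ B : Fin n → Fin n → ℝ, ∀ i j, K i j = ∑ m, B m i * B m j := by
  have hpsd : (Matrix.of K).PosSemidef := by
    refine Matrix.PosSemidef.of_dotProduct_mulVec_nonneg ?_ ?_
    · ext i j
      simp [Matrix.conjTranspose_apply, hsym i j]
    · intro x
      have h := hK x
      simp only [dotProduct, Matrix.mulVec, Matrix.of_apply, star_trivial,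
        dotProduct] at *
      calc (0:ℝ) ≤ ∑ i, ∑ j, x i * x j * K i j := h
        _ = ∑ i, x i * ∑ j, K i j * x j := by
            refine Finset.sum_congr rfl fun i _ => ?_
            rw [Finset.mul_sum]
            exact Finset.sum_congr rfl fun j _ => by ring
  obtain ⟨B, hB⟩ := (by
    letI := Matrix.instPartialOrder (n := Fin n) (𝕜 := ℝ)
    letI := Matrix.instStarOrderedRing (n := Fin n) (𝕜 := ℝ)
    letI := Matrix.instNonnegSpectrumClass (n := Fin n) (𝕜 := ℝ)
    exact CStarAlgebra.nonneg_iff_eq_star_mul_self.mp hpsd.nonneg)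
  refine ⟨fun m i => B m i, fun i j => ?_⟩
  have := congrArg (fun M : Matrix (Fin n) (Fin n) ℝ => M i j) hB
  simpa [Matrix.mul_apply, Matrix.conjTranspose_apply, Matrix.star_eq_conjTranspose] using this

lemma psdk_pow {n : ℕ} {K B : Fin n → Fin n → ℝ}
    (hB : ∀ i j, K i j = ∑ m, B m i * B m j) :
    ∀ p : ℕ, PSDK (fun i j => K i j ^ p) := by
  intro p
  induction p with
  | zero => simpa using psdk_one (n := n)
  | succ p ih =>
      have h := psdk_mul ih hB
      intro a
      simpa [pow_succ] using h a

/-- Entrywise exponential of a symmetric PSD kernel is PSD. -/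
lemma psdk_exp {n : ℕ} {K : Fin n → Fin n → ℝ}
    (hsym : ∀ i j, K j i = K i j) (hK : PSDK K) :
    PSDK (fun i j => Real.exp (K i j)) := by
  obtain ⟨B, hB⟩ := exists_gram hsym hK
  intro a
  have hexp : ∀ x : ℝ, Real.exp x = ∑' p : ℕ, x ^ p / p ! := fun x => by
    rw [Real.exp_eq_exp_ℝ, NormedSpace.exp_eq_tsum_div]
  have hsummable : ∀ i j : Fin n, Summable (fun p : ℕ => a i * a j * (K i j ^ p / p !)) :=
    fun i j => (Real.summable_pow_div_factorial (K i j)).mul_left _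
  have key : ∑ i, ∑ j, a i * a j * Real.exp (K i j)
      = ∑' p : ℕ, ∑ i, ∑ j, a i * a j * (K i j ^ p / p !) := by
    calc ∑ i, ∑ j, a i * a j * Real.exp (K i j)
        = ∑ i, ∑ j, ∑' p : ℕ, a i * a j * (K i j ^ p / p !) := by
          refine Finset.sum_congr rfl fun i _ => Finset.sum_congr rfl fun j _ => ?_
          rw [hexp, ← tsum_mul_left]
      _ = ∑ i, ∑' p : ℕ, ∑ j, a i * a j * (K i j ^ p / p !) :=
          Finset.sum_congr rfl fun i _ => (Summable.tsum_finsetSum fun j _ => hsummable i j).symm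
      _ = ∑' p : ℕ, ∑ i, ∑ j, a i * a j * (K i j ^ p / p !) :=
          (Summable.tsum_finsetSum fun i _ => summable_sum fun j _ => hsummable i j).symm
  rw [key]
  refine tsum_nonneg fun p => ?_
  have h1 : ∑ i, ∑ j, a i * a j * (K i j ^ p / p !)
      = (∑ i, ∑ j, a i * a j * K i j ^ p) / (p ! : ℝ) := by
    rw [Finset.sum_div]
    refine Finset.sum_congr rfl fun i _ => ?_
    rw [Finset.sum_div]
    exact Finset.sum_congr rfl fun j _ => by ring
  rw [h1]
  exact div_nonneg (psdk_pow hB p a) (by positivity)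

lemma psdk_congr {n : ℕ} {K : Fin n → Fin n → ℝ} (hK : PSDK K) (c : Fin n → ℝ) :
    PSDK (fun i j => c i * K i j * c j) := by
  intro a
  have h := hK fun i => a i * c i
  calc (0:ℝ) ≤ ∑ i, ∑ j, (a i * c i) * (a j * c j) * K i j := h
    _ = ∑ i, ∑ j, a i * a j * (c i * K i j * c j) :=
      Finset.sum_congr rfl fun i _ => Finset.sum_congr rfl fun j _ => by ring

/-- A (centered) variogram: a continuous, nonnegative, conditionally negative definite
function vanishing at the origin. -/
def IsVariogram {d : ℕ} (γ : (Fin d → ℝ) → ℝ) : Prop :=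
  Continuous γ ∧ γ 0 = 0 ∧ (∀ s, 0 ≤ γ s) ∧ (∀ s, γ (-s) = γ s) ∧
    ∀ (n : ℕ) (x : Fin n → (Fin d → ℝ)) (a : Fin n → ℝ),
      (∑ i, a i) = 0 → ∑ i, ∑ j, a i * a j * γ (x i - x j) ≤ 0

/-- Key conditional negative definiteness inequality at base point `0`. -/
lemma variogram_key {d : ℕ} {γ : (Fin d → ℝ) → ℝ} (hγ : IsVariogram γ)
    {n : ℕ} (x : Fin n → (Fin d → ℝ)) (a : Fin n → ℝ) :
    ∑ i, ∑ j, a i * a j * γ (x i - x j)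
      ≤ (∑ i, a i * γ (x i)) * (∑ j, a j) + (∑ i, a i) * (∑ j, a j * γ (x j)) := by
  obtain ⟨-, h0, -, hsymγ, hcnd⟩ := hγ
  set x' : Fin (n + 1) → (Fin d → ℝ) := Fin.snoc x 0 with hx'
  set a' : Fin (n + 1) → ℝ := Fin.snoc a (-(∑ i, a i)) with ha'
  have hsum : (∑ i, a' i) = 0 := by
    rw [Fin.sum_univ_castSucc]
    simp [ha', Fin.snoc_castSucc, Fin.snoc_last]
  have h := hcnd (n + 1) x' a' hsum
  rw [Fin.sum_univ_castSucc] at h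
  have inner : ∀ i : Fin (n+1), ∑ j, a' i * a' j * γ (x' i - x' j)
      = (∑ j : Fin n, a' i * a (j) * γ (x' i - x j)) +
        a' i * (-(∑ i, a i)) * γ (x' i - 0) := by
    intro i
    rw [Fin.sum_univ_castSucc]
    simp [ha', hx', Fin.snoc_castSucc, Fin.snoc_last]
  simp only [inner] at h
  simp only [ha', hx', Fin.snoc_castSucc, Fin.snoc_last, sub_zero, zero_sub] at h
  rw [Finset.sum_add_distrib] at h
  simp only [hsymγ, h0, mul_zero] at h
  have e1 : ∑ i : Fin n, (a i * -∑ k : Fin n, a k) * γ (x i)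
      = -((∑ i, a i * γ (x i)) * (∑ j, a j)) := by
    rw [Finset.sum_congr rfl fun i _ =>
      (show (a i * -∑ k : Fin n, a k) * γ (x i)
        = (a i * γ (x i)) * -(∑ k : Fin n, a k) by ring), ← Finset.sum_mul]
    ring
  have e2 : ∑ i : Fin n, ((-∑ k : Fin n, a k) * a i) * γ (x i)
      = -((∑ i, a i * γ (x i)) * (∑ j, a j)) := by
    rw [Finset.sum_congr rfl fun i _ =>
      (show ((-∑ k : Fin n, a k) * a i) * γ (x i)
        = (a i * γ (x i)) * -(∑ k : Fin n, a k) by ring), ← Finset.sum_mul]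
    ring
  rw [e1, e2] at h
  have hc : (∑ i, a i * γ (x i)) * (∑ j, a j)
      = (∑ i, a i) * (∑ j, a j * γ (x j)) := by ring
  linarith

/-- Schoenberg: `exp (-(u * γ (xᵢ - xⱼ)))` is a PSD kernel for `u ≥ 0` and `γ` a variogram. -/
lemma variogram_psdk {d : ℕ} {γ : (Fin d → ℝ) → ℝ} (hγ : IsVariogram γ)
    {u : ℝ} (hu : 0 ≤ u) {n : ℕ} (x : Fin n → (Fin d → ℝ)) :
    PSDK (fun i j => Real.exp (-(u * γ (x i - x j)))) := by
  set N : Fin n → Fin n → ℝ :=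
    fun i j => u * (γ (x i) + γ (x j) - γ (x i - x j)) with hN
  have hsymγ := hγ.2.2.2.1
  have hNsym : ∀ i j, N j i = N i j := by
    intro i j
    simp only [hN]
    rw [show x j - x i = -(x i - x j) by abel, hsymγ]
    ring
  have hNpsd : PSDK N := by
    intro a
    have key : ∑ i, ∑ j, a i * a j * N i j
        = u * ((∑ i, a i * γ (x i)) * (∑ j, a j) + (∑ i, a i) * (∑ j, a j * γ (x j))
            - ∑ i, ∑ j, a i * a j * γ (x i - x j)) := by
      have h1 : (∑ i, a i * γ (x i)) * (∑ j, a j)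
          = ∑ i, ∑ j, (a i * γ (x i)) * a j := Finset.sum_mul_sum _ _ _ _
      have h2 : (∑ i : Fin n, a i) * (∑ j, a j * γ (x j))
          = ∑ i, ∑ j, a i * (a j * γ (x j)) := Finset.sum_mul_sum _ _ _ _
      rw [h1, h2, ← Finset.sum_add_distrib, ← Finset.sum_sub_distrib, Finset.mul_sum]
      refine Finset.sum_congr rfl fun i _ => ?_
      rw [← Finset.sum_add_distrib, ← Finset.sum_sub_distrib, Finset.mul_sum]
      refine Finset.sum_congr rfl fun j _ => ?_
      simp only [hN]; ring
    rw [key]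
    exact mul_nonneg hu (sub_nonneg.2 (variogram_key hγ x a))
  have hexp := psdk_exp hNsym hNpsd
  have hcong := psdk_congr hexp (fun i => Real.exp (-(u * γ (x i))))
  intro a
  refine le_of_le_of_eq (hcong a)
    (Finset.sum_congr rfl fun i _ => Finset.sum_congr rfl fun j _ => ?_)
  congr 1
  simp only
  rw [← Real.exp_add, ← Real.exp_add]
  congr 1
  simp only [hN]; ring

/-- Let `(U, V)` be a nonnegative bivariate random vector with joint moment generating
function `M(u,v) = E[exp(uU + vV)]` (finite for nonpositive arguments), and let
`γ₁, γ₂` be continuous variograms.  Then `ρ(s, ξ) = M(-γ₁ s, -γ₂ ξ)` is a valid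
correlation function: `ρ 0 0 = 1` and `ρ` is positive semidefinite on the product space. -/
theorem mixture_mgf_is_correlation {d k : ℕ}
    {Ω : Type*} [MeasurableSpace Ω] (μ : Measure Ω) [IsProbabilityMeasure μ]
    (U V : Ω → ℝ) (hU : Measurable U) (hV : Measurable V)
    (hUpos : ∀ ω, 0 ≤ U ω) (hVpos : ∀ ω, 0 ≤ V ω)
    (hInt : ∀ u v : ℝ, u ≤ 0 → v ≤ 0 →
      Integrable (fun ω => Real.exp (u * U ω + v * V ω)) μ)
    (γ₁ : (Fin d → ℝ) → ℝ) (γ₂ : (Fin k → ℝ) → ℝ)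
    (hγ₁ : IsVariogram γ₁) (hγ₂ : IsVariogram γ₂)
    (ρ : (Fin d → ℝ) → (Fin k → ℝ) → ℝ)
    (hρ : ∀ s ξ, ρ s ξ = ∫ ω, Real.exp ((-γ₁ s) * U ω + (-γ₂ ξ) * V ω) ∂μ) :
    ρ 0 0 = 1 ∧
      ∀ (n : ℕ) (s : Fin n → (Fin d → ℝ)) (ξ : Fin n → (Fin k → ℝ)) (a : Fin n → ℝ),
        0 ≤ ∑ i, ∑ j, a i * a j * ρ (s i - s j) (ξ i - ξ j) := by
  constructor
  · rw [hρ 0 0, hγ₁.2.1, hγ₂.2.1]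
    simp
  · intro n s ξ a
    set f : Fin n → Fin n → Ω → ℝ := fun i j ω =>
      a i * a j * Real.exp ((-γ₁ (s i - s j)) * U ω + (-γ₂ (ξ i - ξ j)) * V ω) with hf
    have hIntf : ∀ i j, Integrable (f i j) μ := fun i j =>
      ((hInt _ _ (neg_nonpos.mpr (hγ₁.2.2.1 _)) (neg_nonpos.mpr (hγ₂.2.2.1 _))).const_mul _)
    have step : ∑ i, ∑ j, a i * a j * ρ (s i - s j) (ξ i - ξ j)
        = ∫ ω, ∑ i, ∑ j, f i j ω ∂μ := by
      rw [integral_finset_sum _ fun i _ => integrable_finset_sum _ fun j _ => hIntf i j]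
      refine Finset.sum_congr rfl fun i _ => ?_
      rw [integral_finset_sum _ fun j _ => hIntf i j]
      refine Finset.sum_congr rfl fun j _ => ?_
      rw [hρ, hf]
      simp only
      rw [MeasureTheory.integral_const_mul]
    rw [step]
    refine integral_nonneg fun ω => ?_
    have hK1 : PSDK (fun i j => Real.exp (-(U ω * γ₁ (s i - s j)))) :=
      variogram_psdk hγ₁ (hUpos ω) s
    have hK2 : PSDK (fun i j => Real.exp (-(V ω * γ₂ (ξ i - ξ j)))) :=
      variogram_psdk hγ₂ (hVpos ω) ξ
    have hK2sym : ∀ i j, Real.exp (-(V ω * γ₂ (ξ j - ξ i)))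
        = Real.exp (-(V ω * γ₂ (ξ i - ξ j))) := by
      intro i j
      rw [show ξ j - ξ i = -(ξ i - ξ j) by abel, hγ₂.2.2.2.1]
    obtain ⟨B, hB⟩ := exists_gram hK2sym hK2
    have hprod := psdk_mul hK1 hB a
    refine le_of_le_of_eq hprod
      (Finset.sum_congr rfl fun i _ => Finset.sum_congr rfl fun j _ => ?_)
    congr 1
    simp only
    rw [← Real.exp_add]
    congr 1
    ring
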